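/- Let M ≥ 1 be an integer, L > 0, α_g ≥ 0, k_g ∈ ℝ. Suppose the power splitting ratios are β_m^F = β_m^B = 1/2 for all m = 1,…,M and the radiation ratios are δ_n = 1/2 for all n = 1,…,M+1, and the distance from input port m to pinching antenna n is d^{IN}_{m,n} = (L/(M+1))·|m − n + 1/2|. Define ξ^F_{m,n} = δ_n·Π_{j=m+1}^{n−1}(1 − δ_j) for n > m and ξ^B_{m,n} = δ_n·Π_{i=n+1}^{m}(1 − δ_i) for n ≤ m, and let Q be the M × (M+1) matrix with [Q]_{m,n} = sqrt(β_m^F ξ^F_{m,n})·exp(−(α_g + i k_g)·d^{IN}_{m,n}) if n > m and [Q]_{m,n} = sqrt(β_m^B ξ^B_{m,n})·exp(−(α_g + i k_g)·d^{IN}_{m,n}) if n ≤ m. Then, with ϖ = (1/√2)·exp(−(α_g + i k_g)·L/(M+1)), one has [Q]_{m,n} = (1/√2)·exp(L(α_g + i k_g)/(2(M+1)))·ϖ^{m−n+1} for n ≤ m and [Q]_{m,n} = (1/√2)·exp(L(α_g + i k_g)/(2(M+1)))·ϖ^{n−m} for n > m. -/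
import Mathlib

lemma sqrt_half_pow (k : ℕ) : Real.sqrt ((1/2:ℝ)^k) = (1/Real.sqrt 2)^k := by
  have h2 : (1/2:ℝ) = (1/Real.sqrt 2)^2 := by
    rw [div_pow, one_pow, Real.sq_sqrt (by norm_num : (0:ℝ) ≤ 2)]
  rw [h2, ← pow_mul, mul_comm, pow_mul, Real.sqrt_sq (by positivity)]

lemma aux_key (L αg kg : ℝ) (M k : ℕ) :
    (((1/Real.sqrt 2:ℝ)^(k+2) : ℝ) : ℂ) *
      Complex.exp (-((αg:ℂ)+(kg:ℂ)*Complex.I) * ((L/(M+1) * ((k:ℝ)+1/2) : ℝ):ℂ)) =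
    ((1/Real.sqrt 2:ℝ):ℂ) *
      Complex.exp ((L:ℂ)*((αg:ℂ)+(kg:ℂ)*Complex.I)/(2*((M:ℂ)+1))) *
    (((1/Real.sqrt 2:ℝ):ℂ) *
      Complex.exp (-((αg:ℂ)+(kg:ℂ)*Complex.I)*(L:ℂ)/((M:ℂ)+1)))^(k+1) := by
  have hM1 : ((M:ℂ)+1) ≠ 0 := by
    have := Nat.cast_add_one_ne_zero (R := ℂ) M
    exact_mod_cast this
  rw [mul_pow, ← Complex.exp_nat_mul]
  push_cast
  have hexp : Complex.exp (-((αg:ℂ) + (kg:ℂ) * Complex.I) * ((L:ℂ) / ((M:ℂ) + 1) * ((k:ℂ) + 1 / 2))) =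
      Complex.exp ((L:ℂ) * ((αg:ℂ) + (kg:ℂ) * Complex.I) / (2 * ((M:ℂ) + 1))) *
      Complex.exp (((k:ℂ) + 1) * (-((αg:ℂ) + (kg:ℂ) * Complex.I) * (L:ℂ) / ((M:ℂ) + 1))) := by
    rw [← Complex.exp_add]
    congr 1
    field_simp
    ring
  rw [hexp]
  ring

/-- under the symmetric configuration (β_m^F = β_m^B = 1/2, δ_n = 1/2)
with uniform port/antenna placement d^{IN}_{m,n} = (L/(M+1))·|m − n + 1/2|, the
effective in-waveguide channel entries of C-PASS equal the common scalar
(1/√2)·exp(L(α_g + i k_g)/(2(M+1))) times ϖ^{m−n+1} (n ≤ m) or ϖ^{n−m} (n > m),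
where ϖ = (1/√2)·exp(−(α_g + i k_g)L/(M+1)). -/
theorem stmt_19 (M : ℕ) (hM : 1 ≤ M) (L αg kg : ℝ) (hL : 0 < L) (hα : 0 ≤ αg)
    (βF βB δ : ℕ → ℝ)
    (hβF : ∀ m, βF m = 1 / 2) (hβB : ∀ m, βB m = 1 / 2) (hδ : ∀ n, δ n = 1 / 2)
    (dIN : ℕ → ℕ → ℝ)
    (hdIN : ∀ m n, dIN m n = (L / (M + 1)) * |(m : ℝ) - (n : ℝ) + 1 / 2|)
    (ξF ξB : ℕ → ℕ → ℝ)
    (hξF : ∀ m n, ξF m n = δ n * ∏ j ∈ Finset.Icc (m + 1) (n - 1), (1 - δ j))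
    (hξB : ∀ m n, ξB m n = δ n * ∏ i ∈ Finset.Icc (n + 1) m, (1 - δ i))
    (Q : ℕ → ℕ → ℂ)
    (hQ : ∀ m ∈ Finset.Icc 1 M, ∀ n ∈ Finset.Icc 1 (M + 1),
      Q m n = if m < n
        then ((Real.sqrt (βF m * ξF m n) : ℝ) : ℂ) *
          Complex.exp (-((αg : ℂ) + (kg : ℂ) * Complex.I) * ((dIN m n : ℝ) : ℂ))
        else ((Real.sqrt (βB m * ξB m n) : ℝ) : ℂ) *
          Complex.exp (-((αg : ℂ) + (kg : ℂ) * Complex.I) * ((dIN m n : ℝ) : ℂ)))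
    (ϖ : ℂ)
    (hϖ : ϖ = ((1 / Real.sqrt 2 : ℝ) : ℂ) *
      Complex.exp (-((αg : ℂ) + (kg : ℂ) * Complex.I) * (L : ℂ) / ((M : ℂ) + 1))) :
    ∀ m ∈ Finset.Icc 1 M, ∀ n ∈ Finset.Icc 1 (M + 1),
      Q m n = ((1 / Real.sqrt 2 : ℝ) : ℂ) *
        Complex.exp ((L : ℂ) * ((αg : ℂ) + (kg : ℂ) * Complex.I) / (2 * ((M : ℂ) + 1))) *
        (if n ≤ m then ϖ ^ (m - n + 1) else ϖ ^ (n - m)) := by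
  intro m hm n hn
  rw [hQ m hm n hn, hϖ, hdIN, hβF, hβB, hξF, hξB, hδ]
  simp only [Finset.mem_Icc] at hm hn
  simp only [hδ, Finset.prod_const, Nat.card_Icc]
  by_cases hmn : m < n
  · obtain ⟨k, rfl⟩ : ∃ k, n = m + k + 1 := ⟨n - m - 1, by omega⟩
    rw [if_pos hmn, if_neg (by omega)]
    have h1 : m + k + 1 - m = k + 1 := by omega
    have h2 : m + k + 1 - 1 + 1 - (m + 1) = k := by omega
    rw [h1, h2]
    have habs : |(m : ℝ) - (↑(m + k + 1) : ℝ) + 1 / 2| = (k : ℝ) + 1 / 2 := by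
      push_cast
      rw [abs_of_nonpos (by linarith)]
      ring
    rw [habs]
    have hsq : (1/2 : ℝ) * ((1/2) * (1 - 1/2)^k) = (1/2 : ℝ)^(k+2) := by norm_num; ring
    rw [hsq, sqrt_half_pow]
    exact aux_key L αg kg M k
  · obtain ⟨k, rfl⟩ : ∃ k, m = n + k := ⟨m - n, by omega⟩
    rw [if_neg hmn, if_pos (by omega)]
    have h1 : n + k - n + 1 = k + 1 := by omega
    have h2 : n + k + 1 - (n + 1) = k := by omega
    rw [h1, h2]
    have habs : |(↑(n + k) : ℝ) - (n : ℝ) + 1 / 2| = (k : ℝ) + 1 / 2 := by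
      push_cast
      rw [abs_of_nonneg (by linarith)]
      ring
    rw [habs]
    have hsq : (1/2 : ℝ) * ((1/2) * (1 - 1/2)^k) = (1/2 : ℝ)^(k+2) := by norm_num; ring
    rw [hsq, sqrt_half_pow]
    exact aux_key L αg kg M k
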